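/- Let p_0, …, p_n be a linear basis of a subspace V ⊂ ℝ[t], let ξ_1, …, ξ_r be pairwise distinct real numbers, and b_1, …, b_r ≥ 1 integers with b_1 + ⋯ + b_r = n. Then the (n+1)×(n+1) matrix A(t;ξ) whose first row is (p_0(t), …, p_n(t)) and whose remaining rows are the derivatives (p_0^{(j)}(ξ_i), …, p_n^{(j)}(ξ_i)) for i = 1,…,r and j = 0,…,b_i−1, has non-zero determinant if and only if the subspace {f ∈ V : ord_{ξ_i}(f) ≥ b_i for i = 1,…,r} has dimension one. -/

import Mathlib

open Polynomial

lemma aux_dvd_iff (ξ : ℝ) (m : ℕ) (hm : 1 ≤ m) (f : ℝ[X]) :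
    (X - C ξ) ^ m ∣ f ↔ ∀ j < m, Polynomial.eval ξ (Polynomial.derivative^[j] f) = 0 := by
  by_cases hf : f = 0
  · simp [hf, Polynomial.iterate_derivative_zero]
  · obtain ⟨k, rfl⟩ := Nat.exists_eq_succ_of_ne_zero (by omega : m ≠ 0)
    rw [← Polynomial.le_rootMultiplicity_iff hf, Nat.succ_le_iff,
      Polynomial.lt_rootMultiplicity_iff_isRoot_iterate_derivative hf]
    constructor
    · intro h j hj
      exact h j (by omega)
    · intro h j hj
      exact h j (by omega)

lemma aux_ker_rank (n : ℕ) (M : Matrix (Fin n) (Fin (n + 1)) ℝ) :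
    Module.finrank ℝ (LinearMap.ker M.mulVecLin) = 1 ↔
      ∃ c : Fin (n + 1), (M.submatrix id c.succAbove).det ≠ 0 := by
  classical
  have h1 : 1 ≤ Module.finrank ℝ (LinearMap.ker M.mulVecLin) := by
    have hrn := LinearMap.finrank_range_add_finrank_ker M.mulVecLin
    have hdom : Module.finrank ℝ (Fin (n + 1) → ℝ) = n + 1 := by
      simp [Module.finrank_pi]
    have hr : Module.finrank ℝ (LinearMap.range M.mulVecLin) ≤ n := by
      have := Submodule.finrank_le (LinearMap.range M.mulVecLin)
      simpa [Module.finrank_pi] using this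
    omega
  constructor
  · intro hfr
    have hne : LinearMap.ker M.mulVecLin ≠ ⊥ := by
      intro h
      rw [h] at hfr
      simp at hfr
    obtain ⟨x, hxK, hx0⟩ := (Submodule.ne_bot_iff _).mp hne
    obtain ⟨c, hc⟩ : ∃ c, x c ≠ 0 := Function.ne_iff.mp hx0
    refine ⟨c, fun hdet => ?_⟩
    obtain ⟨z, hz0, hz⟩ := Matrix.exists_mulVec_eq_zero_iff.mpr hdet
    set y : Fin (n + 1) → ℝ := c.insertNth 0 z with hy
    have hyK : y ∈ LinearMap.ker M.mulVecLin := by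
      rw [LinearMap.mem_ker]
      funext k
      have : M.mulVec y k = ((M.submatrix id c.succAbove).mulVec z) k := by
        rw [Matrix.mulVec, dotProduct, Fin.sum_univ_succAbove _ c]
        simp [hy, Matrix.mulVec, dotProduct]
      simpa [Matrix.mulVecLin_apply, this] using congrFun hz k
    have hy0 : y ≠ 0 := by
      obtain ⟨j, hj⟩ := Function.ne_iff.mp hz0
      intro h
      apply hj
      have := congrFun h (c.succAbove j)
      simpa [hy] using this
    obtain ⟨a, ha⟩ := (finrank_eq_one_iff_of_nonzero' (⟨x, hxK⟩ : LinearMap.ker M.mulVecLin)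
      (by simpa using hx0)).mp hfr ⟨y, hyK⟩
    have ha' : a • x = y := congrArg Subtype.val ha
    have hac : a * x c = 0 := by
      have := congrFun ha' c
      simpa [hy] using this
    rcases mul_eq_zero.mp hac with h | h
    · apply hy0
      rw [← ha', h, zero_smul]
    · exact hc h
  · rintro ⟨c, hc⟩
    have hinj : ∀ x ∈ LinearMap.ker M.mulVecLin, x c = 0 → x = 0 := by
      intro x hx hxc
      set z : Fin n → ℝ := fun j => x (c.succAbove j) with hzdef
      have hz : (M.submatrix id c.succAbove).mulVec z = 0 := by
        funext k
        have h0 : M.mulVec x k = 0 := by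
          simpa [Matrix.mulVecLin_apply] using congrFun (LinearMap.mem_ker.mp hx) k
        rw [Matrix.mulVec, dotProduct, Fin.sum_univ_succAbove _ c, hxc, mul_zero,
          zero_add] at h0
        simpa [Matrix.mulVec, dotProduct, hzdef] using h0
      have hz0 : z = 0 := by
        by_contra h
        exact hc (Matrix.exists_mulVec_eq_zero_iff.mp ⟨z, h, hz⟩)
      funext c'
      rcases eq_or_ne c' c with rfl | h
      · exact hxc
      · obtain ⟨j, rfl⟩ := Fin.exists_succAbove_eq h
        exact congrFun hz0 j
    have hle : Module.finrank ℝ (LinearMap.ker M.mulVecLin) ≤ 1 := by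
      have hInj : Function.Injective
          ((LinearMap.proj c : (Fin (n + 1) → ℝ) →ₗ[ℝ] ℝ).comp
            (LinearMap.ker M.mulVecLin).subtype) := by
        rw [← LinearMap.ker_eq_bot, eq_bot_iff]
        rintro ⟨x, hx⟩ hmem
        have hxc : x c = 0 := hmem
        simpa using hinj x hx hxc
      have := LinearMap.finrank_le_finrank_of_injective hInj
      simpa using this
    omega

set_option maxHeartbeats 1600000 in
theorem stmt_6 (n r : ℕ) (p : Fin (n + 1) → ℝ[X])
    (hli : LinearIndependent ℝ p)
    (ξ : ℕ → ℝ) (hξ : ∀ i < r, ∀ j < r, ξ i = ξ j → i = j)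
    (b : ℕ → ℕ) (hb : ∀ i < r, 1 ≤ b i)
    (hsum : ∑ i ∈ Finset.range r, b i = n)
    (A : Matrix (Fin (n + 1)) (Fin (n + 1)) ℝ[X])
    (hA0 : ∀ c, A 0 c = p c)
    (hA : ∀ i < r, ∀ j < b i,
      ∀ (hrow : 1 + (∑ i' ∈ Finset.range i, b i') + j < n + 1) (c : Fin (n + 1)),
        A ⟨1 + (∑ i' ∈ Finset.range i, b i') + j, hrow⟩ c =
          C (Polynomial.eval (ξ i) (Polynomial.derivative^[j] (p c)))) :
    A.det ≠ 0 ↔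
      Module.finrank ℝ (Submodule.span ℝ
        {f : ℝ[X] | f ∈ Submodule.span ℝ (Set.range p) ∧
          ∀ i < r, (X - C (ξ i)) ^ b i ∣ f}) = 1 := by
  classical
  let S : ℕ → ℕ := fun i => ∑ i' ∈ Finset.range i, b i'
  have hSstep : ∀ i, S (i + 1) = S i + b i := fun i => Finset.sum_range_succ b i
  have hSmono : ∀ ⦃i i'⦄, i ≤ i' → S i ≤ S i' := fun i i' h =>
    Finset.sum_le_sum_of_subset (Finset.range_subset_range.2 h)
  have hSr : S r = n := hsum
  have hlt : ∀ i : Fin r, ∀ j : Fin (b i), S i + j < n := by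
    intro i j
    have h1 := hSstep i
    have h2 : S (↑i + 1) ≤ S r := hSmono i.isLt
    have h3 := j.isLt
    omega
  let ι := (i : Fin r) × Fin (b i)
  let g : ι → Fin n := fun s => ⟨S s.1 + s.2, hlt s.1 s.2⟩
  have hgval : ∀ s : ι, (g s : ℕ) = S s.1 + s.2 := fun _ => rfl
  have hginj : Function.Injective g := by
    rintro ⟨i, j⟩ ⟨i', j'⟩ h
    have hval : S ↑i + ↑j = S ↑i' + ↑j' := congrArg Fin.val h
    have hii : (i : ℕ) = (i' : ℕ) := by
      rcases Nat.lt_trichotomy (i : ℕ) (i' : ℕ) with h' | h' | h'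
      · have := hSmono (show (↑i + 1) ≤ (i' : ℕ) from h')
        have := hSstep i
        have := j.isLt
        omega
      · exact h'
      · have := hSmono (show (↑i' + 1) ≤ (i : ℕ) from h')
        have := hSstep i'
        have := j'.isLt
        omega
    have hii' : i = i' := Fin.ext hii
    subst hii'
    have hjj : j = j' := Fin.ext (by omega)
    rw [hjj]
  have hcard : Fintype.card ι = n := by
    have h1 : Fintype.card ι = ∑ i : Fin r, b i := by simp [ι]
    rw [h1, Fin.sum_univ_eq_sum_range (fun i => b i) r]
    exact hsum
  have hgbij : Function.Bijective g :=
    (Fintype.bijective_iff_injective_and_card g).mpr ⟨hginj, by rw [hcard, Fintype.card_fin]⟩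
  let gE : ι ≃ Fin n := Equiv.ofBijective g hgbij
  let σ : Fin n → ι := gE.symm
  have hArow : ∀ (s : ι) (c : Fin (n + 1)),
      A (Fin.succ (g s)) c = C (Polynomial.eval (ξ s.1) (Polynomial.derivative^[s.2] (p c))) := by
    rintro ⟨i, j⟩ c
    have hrow : 1 + S ↑i + ↑j < n + 1 := by have := hlt i j; omega
    have h := hA ↑i i.isLt ↑j j.isLt hrow c
    have heq : Fin.succ (g ⟨i, j⟩) = ⟨1 + S ↑i + ↑j, hrow⟩ := by
      apply Fin.ext
      simp only [Fin.val_succ, hgval]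
      omega
    rw [heq]
    exact h
  let Bm : Matrix (Fin n) (Fin (n + 1)) ℝ := fun k c =>
    Polynomial.eval (ξ (σ k).1) (Polynomial.derivative^[(σ k).2] (p c))
  have hA' : ∀ (k : Fin n) (c : Fin (n + 1)), A (Fin.succ k) c = C (Bm k c) := by
    intro k c
    have h := hArow (σ k) c
    have hk : g (σ k) = k := gE.apply_symm_apply k
    rw [hk] at h
    exact h
  let cof : Fin (n + 1) → ℝ := fun c => (Bm.submatrix id c.succAbove).det
  have hdet : A.det = ∑ c : Fin (n + 1), ((-1 : ℝ) ^ (c : ℕ) * cof c) • p c := by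
    rw [Matrix.det_succ_row_zero]
    refine Finset.sum_congr rfl fun c _ => ?_
    have hsub : A.submatrix Fin.succ c.succAbove =
        (C : ℝ →+* ℝ[X]).mapMatrix (Bm.submatrix id c.succAbove) := by
      ext k j
      simp [Matrix.submatrix_apply, RingHom.mapMatrix_apply, Matrix.map_apply, hA']
    rw [hsub, ← RingHom.map_det, hA0, Polynomial.smul_eq_C_mul]
    simp only [map_mul, map_pow, map_neg, map_one, cof]
    ring
  have hiff1 : A.det ≠ 0 ↔ ∃ c, cof c ≠ 0 := by
    rw [hdet]
    constructor
    · intro h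
      by_contra hc
      push_neg at hc
      apply h
      simp [hc]
    · rintro ⟨c, hc⟩ h
      have := Fintype.linearIndependent_iff.mp hli _ h c
      rcases mul_eq_zero.mp this with h' | h'
      · exact pow_ne_zero _ (by norm_num : (-1 : ℝ) ≠ 0) h'
      · exact hc h'
  -- the submodule
  let ℓ : Fin n → ℝ[X] →ₗ[ℝ] ℝ := fun k =>
    (Polynomial.leval (ξ (σ k).1)).comp
      ((Polynomial.derivative : ℝ[X] →ₗ[ℝ] ℝ[X]) ^ ((σ k).2 : ℕ))
  have hℓ : ∀ (k : Fin n) (f : ℝ[X]),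
      ℓ k f = Polynomial.eval (ξ (σ k).1) (Polynomial.derivative^[(σ k).2] f) := by
    intro k f
    simp [ℓ, Module.End.pow_apply, Polynomial.leval_apply]
  let 𝒲 : Submodule ℝ ℝ[X] :=
    Submodule.span ℝ (Set.range p) ⊓ ⨅ k : Fin n, LinearMap.ker (ℓ k)
  have hsetW : {f : ℝ[X] | f ∈ Submodule.span ℝ (Set.range p) ∧
      ∀ i < r, (X - C (ξ i)) ^ b i ∣ f} = (𝒲 : Set ℝ[X]) := by
    ext f
    simp only [Set.mem_setOf_eq, SetLike.mem_coe, 𝒲, Submodule.mem_inf, Submodule.mem_iInf,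
      LinearMap.mem_ker]
    refine and_congr_right fun _ => ?_
    constructor
    · intro hdvd k
      rw [hℓ]
      exact (aux_dvd_iff _ _ (hb _ (σ k).1.isLt) f).mp (hdvd _ (σ k).1.isLt) _ (σ k).2.isLt
    · intro hker i hi
      rw [aux_dvd_iff _ _ (hb i hi)]
      intro j hj
      have h := hker (gE ⟨⟨i, hi⟩, ⟨j, hj⟩⟩)
      rw [hℓ] at h
      have hs : σ (gE ⟨⟨i, hi⟩, ⟨j, hj⟩⟩) = ⟨⟨i, hi⟩, ⟨j, hj⟩⟩ := gE.symm_apply_apply _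
      rw [hs] at h
      exact h
  -- coordinates
  let K : Submodule ℝ (Fin (n + 1) → ℝ) := LinearMap.ker Bm.mulVecLin
  let L : (Fin (n + 1) → ℝ) →ₗ[ℝ] ℝ[X] := Fintype.linearCombination ℝ p
  have hL : ∀ x, L x = ∑ c, x c • p c := fun x => rfl
  have hLker : ∀ (x : Fin (n + 1) → ℝ) (k : Fin n), ℓ k (L x) = ∑ c, Bm k c * x c := by
    intro x k
    rw [hL, map_sum]
    refine Finset.sum_congr rfl fun c _ => ?_
    rw [map_smul, hℓ, smul_eq_mul, mul_comm]
  have hmem : ∀ x ∈ K, L x ∈ 𝒲 := by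
    intro x hx
    refine Submodule.mem_inf.mpr ⟨?_, ?_⟩
    · rw [hL]
      exact Submodule.sum_mem _ fun c _ =>
        Submodule.smul_mem _ _ (Submodule.subset_span ⟨c, rfl⟩)
    · refine Submodule.mem_iInf _ |>.mpr fun k => LinearMap.mem_ker.mpr ?_
      rw [hLker]
      have h := congrFun (LinearMap.mem_ker.mp hx) k
      simpa [Matrix.mulVecLin_apply, Matrix.mulVec, dotProduct] using h
  let Φ : K →ₗ[ℝ] 𝒲 := LinearMap.codRestrict 𝒲 (L.comp K.subtype) fun y => hmem y.1 y.2
  have hLinj : Function.Injective L := by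
    rw [← LinearMap.ker_eq_bot, eq_bot_iff]
    intro x hx
    have hx0 : ∀ i, x i = 0 := Fintype.linearIndependent_iff.mp hli x (by
      rw [← hL x]; exact hx)
    exact funext hx0
  have hΦbij : Function.Bijective Φ := by
    constructor
    · intro a b h
      exact Subtype.ext (hLinj (congrArg Subtype.val h))
    · rintro ⟨f, hf⟩
      obtain ⟨hsp, hker⟩ := Submodule.mem_inf.mp hf
      obtain ⟨x, hx⟩ := (Submodule.mem_span_range_iff_exists_fun ℝ).mp hsp
      have hLx : L x = f := by rw [hL]; exact hx
      have hxK : x ∈ K := by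
        rw [LinearMap.mem_ker]
        funext k
        have h1 : ℓ k f = 0 := LinearMap.mem_ker.mp (Submodule.mem_iInf _ |>.mp hker k)
        have h2 := hLker x k
        rw [hLx, h1] at h2
        simpa [Matrix.mulVecLin_apply, Matrix.mulVec, dotProduct] using h2.symm
      exact ⟨⟨x, hxK⟩, Subtype.ext hLx⟩
  have hfr : Module.finrank ℝ K = Module.finrank ℝ 𝒲 :=
    (LinearEquiv.ofBijective Φ hΦbij).finrank_eq
  rw [hiff1, hsetW, Submodule.span_eq, ← hfr]
  exact (aux_ker_rank n Bm).symm
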